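/- Let F, G : ℝ^d × ℝ^d → ℝ^d be globally Lipschitz, λ = 0, and let U : (0,∞) × ℝ^d → ℝ^d be a C¹ solution of ∂_t U + (F(x,U)·∇_x)U = G(x, U) such that (U(t)) converges in the sense of graphs to A_{x₀} as t → 0. For x₁ ∈ ℝ^d, t₁ > 0, let x : (0, t₁] → ℝ^d solve dx/dt = F(x(t), U(t, x(t))), x(t₁) = x₁. Then x(t) → x₀ as t → 0. -/

import Mathlib

open Filter Set


lemma gronwallBound_mono_time {δ K ε : ℝ} (hδ : 0 ≤ δ) (hK : 0 < K) (hε : 0 ≤ ε)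
    {s t : ℝ} (hst : s ≤ t) : gronwallBound δ K ε s ≤ gronwallBound δ K ε t := by
  rw [gronwallBound_of_K_ne_0 hK.ne']
  have h1 : Real.exp (K * s) ≤ Real.exp (K * t) := Real.exp_le_exp.2 (by nlinarith)
  have h2 : (0:ℝ) ≤ ε / K := div_nonneg hε hK.le
  nlinarith

lemma exists_limit_right {E : Type*} [NormedAddCommGroup E] [CompleteSpace E]
    {f : ℝ → E} {t₁ C : ℝ} (ht₁ : 0 < t₁) (hC : 0 ≤ C)
    (h : ∀ s ∈ Set.Ioc (0:ℝ) t₁, ∀ t ∈ Set.Ioc (0:ℝ) t₁, ‖f t - f s‖ ≤ C * |t - s|) :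
    ∃ p, Filter.Tendsto f (nhdsWithin 0 (Set.Ioi 0)) (nhds p) ∧
      ∀ t ∈ Set.Ioc (0:ℝ) t₁, ‖f t - p‖ ≤ C * t := by
  set tn : ℕ → ℝ := fun n => t₁ * (1 / (n + 1)) with htn
  have htn_pos : ∀ n, 0 < tn n := fun n => by positivity
  have htn_mem : ∀ n, tn n ∈ Set.Ioc (0:ℝ) t₁ := by
    intro n
    refine ⟨htn_pos n, ?_⟩
    rw [htn]
    have h1 : (1:ℝ) / (n + 1) ≤ 1 := by
      rw [div_le_one (by positivity)]
      linarith [Nat.cast_nonneg (α := ℝ) n]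
    nlinarith
  have htn0 : Tendsto tn atTop (nhds 0) := by
    have := tendsto_one_div_add_atTop_nhds_zero_nat (𝕜 := ℝ)
    have h2 := this.const_mul t₁
    simpa [htn, one_div] using h2
  have hcau : CauchySeq (fun n => f (tn n)) := by
    rw [Metric.cauchySeq_iff']
    intro ε hε
    obtain ⟨N, hN⟩ := (htn0.eventually
      (gt_mem_nhds (show (0:ℝ) < ε / (2 * (C + 1)) by positivity))).exists_forall_of_atTop
    refine ⟨N, fun n hn => ?_⟩
    have h1 := h _ (htn_mem N) _ (htn_mem n)
    rw [dist_eq_norm]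
    calc ‖f (tn n) - f (tn N)‖ ≤ C * |tn n - tn N| := h1
      _ ≤ (C + 1) * (|tn n| + |tn N|) := by
          have := abs_sub (tn n) (tn N)
          nlinarith [abs_nonneg (tn n), abs_nonneg (tn N), abs_sub_abs_le_abs_sub (tn n) (tn N),
            abs_sub (tn n) (tn N)]
      _ < ε := by
          have h2 := hN N le_rfl
          have h3 := hN n hn
          rw [abs_of_pos (htn_pos n), abs_of_pos (htn_pos N)]
          have hC1 : (0:ℝ) < C + 1 := by linarith
          calc (C + 1) * (tn n + tn N) < (C + 1) * (ε / (2 * (C + 1)) + ε / (2 * (C + 1))) := by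
                apply mul_lt_mul_of_pos_left _ hC1
                linarith
            _ = ε := by field_simp; ring
  obtain ⟨p, hp⟩ := cauchySeq_tendsto_of_complete hcau
  have key : ∀ t ∈ Set.Ioc (0:ℝ) t₁, ‖f t - p‖ ≤ C * t := by
    intro t ht
    have h1 : Tendsto (fun n => ‖f t - f (tn n)‖) atTop (nhds ‖f t - p‖) :=
      (tendsto_const_nhds.sub hp).norm
    have h2 : Tendsto (fun n => C * |t - tn n|) atTop (nhds (C * t)) := by
      have h2' : Tendsto (fun n => t - tn n) atTop (nhds (t - 0)) :=
        tendsto_const_nhds.sub htn0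
      have h2'' := (h2'.abs).const_mul C
      simpa [abs_of_pos ht.1] using h2''
    exact le_of_tendsto_of_tendsto' h1 h2 fun n => h _ (htn_mem n) _ ht
  refine ⟨p, ?_, key⟩
  rw [tendsto_iff_dist_tendsto_zero]
  have hb : Tendsto (fun t : ℝ => C * t) (nhdsWithin 0 (Set.Ioi 0)) (nhds 0) := by
    have : Tendsto (fun t : ℝ => C * t) (nhdsWithin 0 (Set.Ioi 0)) (nhds (C * 0)) :=
      (tendsto_id.const_mul C).mono_left nhdsWithin_le_nhds
    simpa using this
  have hIoc : Set.Ioc (0:ℝ) t₁ ∈ nhdsWithin 0 (Set.Ioi 0) := by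
    apply mem_nhdsWithin.2
    exact ⟨Set.Iio t₁, isOpen_Iio, ht₁, fun y hy => ⟨hy.2, le_of_lt hy.1⟩⟩
  exact squeeze_zero'
    (Filter.Eventually.mono self_mem_nhdsWithin fun t ht => dist_nonneg)
    (Filter.Eventually.mono hIoc fun t ht => by rw [dist_eq_norm]; exact key t ht) hb

set_option maxHeartbeats 1600000 in
/-- If `U` solves `∂ₜU + (F(x,U)·∇ₓ)U = G(x,U)` (case `λ = 0`), `U(t)` converges
in the sense of graphs to `A_{x₀}` as `t → 0`, and `x(·)` solves the
characteristic ODE `ẋ = F(x, U(t,x))` with `x(t₁) = x₁`, then `x(t) → x₀`. -/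
theorem stmt_11 {d : ℕ} (x₀ x₁ : EuclideanSpace ℝ (Fin d)) (t₁ : ℝ) (ht₁ : 0 < t₁)
    (L : ℝ)
    (F G : EuclideanSpace ℝ (Fin d) → EuclideanSpace ℝ (Fin d) → EuclideanSpace ℝ (Fin d))
    (hF : ∀ x u x' u', ‖F x u - F x' u'‖ ≤ L * (‖x - x'‖ + ‖u - u'‖))
    (hG : ∀ x u x' u', ‖G x u - G x' u'‖ ≤ L * (‖x - x'‖ + ‖u - u'‖))
    (U : ℝ → EuclideanSpace ℝ (Fin d) → EuclideanSpace ℝ (Fin d))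
    (DU : ℝ → EuclideanSpace ℝ (Fin d) →
      (ℝ × EuclideanSpace ℝ (Fin d) →L[ℝ] EuclideanSpace ℝ (Fin d)))
    (hU : ∀ t, 0 < t → ∀ x,
      HasFDerivAt (fun p : ℝ × EuclideanSpace ℝ (Fin d) => U p.1 p.2) (DU t x) (t, x))
    (hpde : ∀ t, 0 < t → ∀ x, DU t x (1, F x (U t x)) = G x (U t x))
    (hgraph : ∀ (tn : ℕ → ℝ) (xn : ℕ → EuclideanSpace ℝ (Fin d))
      (p q : EuclideanSpace ℝ (Fin d)),
      (∀ n, 0 < tn n) → Filter.Tendsto tn Filter.atTop (nhds 0) →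
      Filter.Tendsto xn Filter.atTop (nhds p) →
      Filter.Tendsto (fun n => U (tn n) (xn n)) Filter.atTop (nhds q) →
      p = x₀)
    (x : ℝ → EuclideanSpace ℝ (Fin d))
    (hx : ∀ t ∈ Set.Ioc (0 : ℝ) t₁, HasDerivAt x (F (x t) (U t (x t))) t)
    (hx1 : x t₁ = x₁) :
    Filter.Tendsto x (nhdsWithin 0 (Set.Ioi 0)) (nhds x₀) := by
  set u : ℝ → EuclideanSpace ℝ (Fin d) := fun t => U t (x t) with hu_def
  -- derivative of u along the trajectory
  have hu : ∀ t ∈ Set.Ioc (0:ℝ) t₁, HasDerivAt u (G (x t) (u t)) t := by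
    intro t ht
    have hpair : HasDerivAt (fun s => (s, x s)) ((1 : ℝ), F (x t) (u t)) t :=
      HasDerivAt.prodMk (hasDerivAt_id t) (hx t ht)
    have h2 := (hU t ht.1 (x t)).comp_hasDerivAt t hpair
    rw [hpde t ht.1 (x t)] at h2
    exact h2
  -- constants
  set L' : ℝ := max L 0 with hL'
  have hL'0 : 0 ≤ L' := le_max_right _ _
  set K : ℝ := 2 * L' + 1 with hK
  have hK0 : 0 < K := by positivity
  set c : ℝ := max ‖F 0 0‖ ‖G 0 0‖ with hc
  have hc0 : 0 ≤ c := le_trans (norm_nonneg _) (le_max_left _ _)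
  -- pointwise linear growth bounds
  have hFb : ∀ a b : EuclideanSpace ℝ (Fin d), ‖F a b‖ ≤ K * ‖((a, b) : EuclideanSpace ℝ (Fin d) × EuclideanSpace ℝ (Fin d))‖ + c := by
    intro a b
    have h1 : ‖F a b - F 0 0‖ ≤ L * (‖a - 0‖ + ‖b - 0‖) := hF a b 0 0
    have h2 : ‖a‖ ≤ ‖((a, b) : EuclideanSpace ℝ (Fin d) × EuclideanSpace ℝ (Fin d))‖ := norm_fst_le (a, b)
    have h3 : ‖b‖ ≤ ‖((a, b) : EuclideanSpace ℝ (Fin d) × EuclideanSpace ℝ (Fin d))‖ := norm_snd_le (a, b)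
    have h4 : ‖F a b‖ ≤ ‖F a b - F 0 0‖ + ‖F 0 0‖ := by
      have := norm_add_le (F a b - F 0 0) (F 0 0)
      simpa using this
    have h5 : L * (‖a‖ + ‖b‖) ≤ L' * (‖a‖ + ‖b‖) :=
      mul_le_mul_of_nonneg_right (le_max_left _ _) (by positivity)
    have h6 : ‖F 0 0‖ ≤ c := le_max_left _ _
    simp only [sub_zero] at h1
    nlinarith [norm_nonneg a, norm_nonneg b, norm_nonneg ((a, b) : EuclideanSpace ℝ (Fin d) × EuclideanSpace ℝ (Fin d))]
  have hGb : ∀ a b : EuclideanSpace ℝ (Fin d), ‖G a b‖ ≤ K * ‖((a, b) : EuclideanSpace ℝ (Fin d) × EuclideanSpace ℝ (Fin d))‖ + c := by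
    intro a b
    have h1 : ‖G a b - G 0 0‖ ≤ L * (‖a - 0‖ + ‖b - 0‖) := hG a b 0 0
    have h2 : ‖a‖ ≤ ‖((a, b) : EuclideanSpace ℝ (Fin d) × EuclideanSpace ℝ (Fin d))‖ := norm_fst_le (a, b)
    have h3 : ‖b‖ ≤ ‖((a, b) : EuclideanSpace ℝ (Fin d) × EuclideanSpace ℝ (Fin d))‖ := norm_snd_le (a, b)
    have h4 : ‖G a b‖ ≤ ‖G a b - G 0 0‖ + ‖G 0 0‖ := by
      have := norm_add_le (G a b - G 0 0) (G 0 0)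
      simpa using this
    have h5 : L * (‖a‖ + ‖b‖) ≤ L' * (‖a‖ + ‖b‖) :=
      mul_le_mul_of_nonneg_right (le_max_left _ _) (by positivity)
    have h6 : ‖G 0 0‖ ≤ c := le_max_right _ _
    simp only [sub_zero] at h1
    nlinarith [norm_nonneg a, norm_nonneg b, norm_nonneg ((a, b) : EuclideanSpace ℝ (Fin d) × EuclideanSpace ℝ (Fin d))]
  -- time-reversed trajectory in the product space
  set g : ℝ → EuclideanSpace ℝ (Fin d) × EuclideanSpace ℝ (Fin d) := fun s => (x (t₁ - s), u (t₁ - s)) with hg_def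
  set g' : ℝ → EuclideanSpace ℝ (Fin d) × EuclideanSpace ℝ (Fin d) := fun s =>
    (-(F (x (t₁ - s)) (u (t₁ - s))), -(G (x (t₁ - s)) (u (t₁ - s)))) with hg'_def
  have hg : ∀ s ∈ Set.Ico (0:ℝ) t₁, HasDerivAt g (g' s) s := by
    intro s hs
    have hts : t₁ - s ∈ Set.Ioc (0:ℝ) t₁ := ⟨by linarith [hs.2], by linarith [hs.1]⟩
    have hneg : HasDerivAt (fun r : ℝ => t₁ - r) (-1) s := by
      simpa using (hasDerivAt_id s).const_sub t₁
    have hx' := (hx _ hts).scomp s hneg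
    have hu' := (hu _ hts).scomp s hneg
    simp only [neg_one_smul] at hx' hu'
    exact HasDerivAt.prodMk hx' hu'
  set δ : ℝ := ‖g 0‖ with hδ
  have hδ0 : 0 ≤ δ := norm_nonneg _
  set B : ℝ := gronwallBound δ K c t₁ with hB
  have hB0 : δ ≤ B := by
    have := gronwallBound_mono_time hδ0 hK0 hc0 (le_of_lt ht₁) (s := 0)
    rwa [gronwallBound_x0] at this
  -- Gronwall bound on the whole interval
  have hbound : ∀ t ∈ Set.Ioc (0:ℝ) t₁, ‖((x t, u t) : EuclideanSpace ℝ (Fin d) × EuclideanSpace ℝ (Fin d))‖ ≤ B := by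
    intro t ht
    have hsub : Set.Icc (0:ℝ) (t₁ - t) ⊆ Set.Ico (0:ℝ) t₁ := fun r hr =>
      ⟨hr.1, by linarith [hr.2, ht.1]⟩
    have hcont : ContinuousOn g (Set.Icc 0 (t₁ - t)) := fun r hr =>
      (hg r (hsub hr)).continuousAt.continuousWithinAt
    have hderiv : ∀ r ∈ Set.Ico (0:ℝ) (t₁ - t), HasDerivWithinAt g (g' r) (Set.Ici r) r :=
      fun r hr => (hg r (hsub ⟨hr.1, le_of_lt hr.2⟩)).hasDerivWithinAt
    have hbd : ∀ r ∈ Set.Ico (0:ℝ) (t₁ - t), ‖g' r‖ ≤ K * ‖g r‖ + c := by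
      intro r hr
      have hFr := hFb (x (t₁ - r)) (u (t₁ - r))
      have hGr := hGb (x (t₁ - r)) (u (t₁ - r))
      have hnorm : ‖g' r‖ = max ‖F (x (t₁ - r)) (u (t₁ - r))‖ ‖G (x (t₁ - r)) (u (t₁ - r))‖ := by
        rw [hg'_def]
        simp [Prod.norm_def]
      rw [hnorm]
      exact max_le hFr hGr
    have := norm_le_gronwallBound_of_norm_deriv_right_le hcont hderiv le_rfl hbd
      (t₁ - t) ⟨by linarith [ht.2], by linarith [ht.1]⟩
    have h2 : gronwallBound δ K c (t₁ - t - 0) ≤ B := by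
      rw [sub_zero]
      exact gronwallBound_mono_time hδ0 hK0 hc0 (by linarith [ht.1])
    have h3 : g (t₁ - t) = (x t, u t) := by rw [hg_def]; norm_num
    rw [h3] at this
    linarith
  set C : ℝ := K * B + c with hC
  have hC0 : 0 ≤ C := by nlinarith [hB0, hδ0, hc0, hK0]
  -- uniform derivative bounds give a Lipschitz estimate on (0, t₁]
  have hFbd : ∀ t ∈ Set.Ioc (0:ℝ) t₁, ‖F (x t) (u t)‖ ≤ C :=
    fun t ht => le_trans (hFb (x t) (u t)) (by
      have := hbound t ht
      nlinarith)
  have hGbd : ∀ t ∈ Set.Ioc (0:ℝ) t₁, ‖G (x t) (u t)‖ ≤ C :=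
    fun t ht => le_trans (hGb (x t) (u t)) (by
      have := hbound t ht
      nlinarith)
  have hlipaux : ∀ (f f' : ℝ → EuclideanSpace ℝ (Fin d)),
      (∀ t ∈ Set.Ioc (0:ℝ) t₁, HasDerivAt f (f' t) t) →
      (∀ t ∈ Set.Ioc (0:ℝ) t₁, ‖f' t‖ ≤ C) →
      ∀ s ∈ Set.Ioc (0:ℝ) t₁, ∀ t ∈ Set.Ioc (0:ℝ) t₁, ‖f t - f s‖ ≤ C * |t - s| := by
    intro f f' hf hf' s hs t ht
    have key : ∀ a ∈ Set.Ioc (0:ℝ) t₁, ∀ b ∈ Set.Ioc (0:ℝ) t₁, a ≤ b →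
        ‖f b - f a‖ ≤ C * |b - a| := by
      intro a ha b hb hab
      have hsubset : Set.Icc a b ⊆ Set.Ioc (0:ℝ) t₁ := fun r hr =>
        ⟨lt_of_lt_of_le ha.1 hr.1, le_trans hr.2 hb.2⟩
      have := (convex_Icc a b).norm_image_sub_le_of_norm_hasDerivWithin_le
        (fun r hr => (hf r (hsubset hr)).hasDerivWithinAt)
        (fun r hr => hf' r (hsubset hr)) (left_mem_Icc.2 hab) (right_mem_Icc.2 hab)
      rwa [Real.norm_eq_abs] at this
    rcases le_total s t with h | h
    · exact key s hs t ht h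
    · have := key t ht s hs h
      rw [norm_sub_rev, abs_sub_comm] at this
      exact this
  have hxlip := hlipaux x (fun t => F (x t) (u t)) hx hFbd
  have hulip := hlipaux u (fun t => G (x t) (u t)) hu hGbd
  obtain ⟨p, hxp, hxest⟩ := exists_limit_right ht₁ hC0 hxlip
  obtain ⟨q, huq, _⟩ := exists_limit_right ht₁ hC0 hulip
  -- the sequence along which we apply graph convergence
  set tn : ℕ → ℝ := fun n => t₁ * (1 / (n + 1)) with htn
  have htn_pos : ∀ n, 0 < tn n := fun n => by positivity
  have htn0 : Tendsto tn atTop (nhds 0) := by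
    have h2 : Tendsto (fun n : ℕ => t₁ * (1 / ((n : ℝ) + 1))) atTop (nhds (t₁ * 0)) :=
      tendsto_one_div_add_atTop_nhds_zero_nat.const_mul t₁
    rw [mul_zero] at h2
    exact h2
  have htnW : Tendsto tn atTop (nhdsWithin 0 (Set.Ioi 0)) :=
    tendsto_nhdsWithin_of_tendsto_nhds_of_eventually_within _ htn0
      (Filter.Eventually.of_forall fun n => htn_pos n)
  have hpx : p = x₀ :=
    hgraph tn (fun n => x (tn n)) p q htn_pos htn0 (hxp.comp htnW) (huq.comp htnW)
  rw [← hpx]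
  exact hxp
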